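/- (Main theorem, linear converse) Let F be any field and t,r positive integers. If an encoder matrix H ∈ F^{r×36t} with blocks H_1,…,H_36 ∈ F^{r×t} satisfies the decoding condition rank H_{{i}∪B_i^{I4}} = rank H_{B_i^{I4}} + t for every user i ∈ {1,…,36} of the instance I4, then r > 6t. Hence no linear index code over any field achieves broadcast rate 6 for I4. -/

import Mathlib

open Matrix

/-- The rank of the `r × |L|t` matrix formed by horizontally concatenating the
blocks `H l`, `l ∈ L`, of the block encoder matrix `H = [H_1 | ⋯ | H_m]`. -/
noncomputable def blockRank {F : Type} [Field F] {m r t : ℕ}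
    (H : Fin m → Matrix (Fin r) (Fin t) F) (L : Finset (Fin m)) : ℕ :=
  Matrix.rank (Matrix.of fun (k : Fin r) (p : {l // l ∈ L} × Fin t) => H p.1.1 k p.2)

/-- Side-information sets of the 10-user instance `I1` (0-based indexing). -/
def I1sideInfo : Fin 10 → Finset (Fin 10) :=
  ![{3, 5, 6}, {0, 4, 5}, {0, 1, 6}, {1, 2, 5}, {0, 2, 3}, {2, 4, 6}, {1, 3, 4}, ∅, ∅, ∅]

/-- Interfering sets of `I1`: `B_i = {1,…,10} \ (A_i ∪ {i})`. -/
def I1interf (i : Fin 10) : Finset (Fin 10) :=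
  Finset.univ \ insert i (I1sideInfo i)

/-- Interfering sets of the 26-user instance `I2` (0-based indexing). -/
def I2interf : Fin 26 → Finset (Fin 26) :=
  ![{1, 2, 4, 10, 11, 12, 14, 21, 22, 23, 24, 25},
    {0, 2, 5, 10, 11, 12, 15, 20, 21, 23, 24, 25},
    {0, 1, 3, 10, 11, 12, 13, 20, 21, 22, 23, 25},
    {4, 5, 13, 14, 15},
    {3, 5, 13, 14, 15},
    {3, 4, 13, 14, 15},
    {16},
    {0, 4, 6, 10, 14, 16, 17},
    {1, 5, 6, 11, 15, 16, 18},
    {2, 3, 6, 12, 13, 16, 19},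
    {0, 1, 2, 4, 11, 12, 14, 20, 22, 23, 24, 25},
    {0, 1, 2, 5, 10, 12, 15, 20, 21, 22, 24, 25},
    {0, 1, 2, 3, 10, 11, 13, 20, 21, 22, 23, 24},
    {3}, {4}, {5}, {6},
    {0, 4, 6, 7, 10, 14, 16},
    {1, 5, 6, 8, 11, 15, 16},
    {2, 3, 6, 9, 12, 13, 16},
    {3, 5, 13, 15, 21},
    {3, 5, 13, 15, 20},
    {3, 4, 13, 14, 23},
    {3, 4, 13, 14, 22},
    {4, 5, 14, 15, 25},
    {4, 5, 14, 15, 24}]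

/-- Interfering sets of the 36-user two-way connection `I4 = I1 ↔ I2`:
users `0,…,9` keep the interfering sets of `I1`, users `10,…,35` get the
interfering sets of `I2` shifted by `10`. -/
def I4interf (i : Fin 36) : Finset (Fin 36) :=
  if h : (i : ℕ) < 10 then
    (I1interf ⟨i, h⟩).image (Fin.castAdd 26)
  else
    (I2interf ⟨(i : ℕ) - 10, by have := i.isLt; omega⟩).image (Fin.natAdd 10)

open Module Submodule

/-- Explicit table of the interfering sets of `I4`. -/
def I4tab : Fin 36 → Finset (Fin 36) :=
  ![{1,2,4,7,8,9}, {2,3,6,7,8,9}, {3,4,5,7,8,9}, {0,4,6,7,8,9}, {1,5,6,7,8,9},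
    {0,1,3,7,8,9}, {0,2,5,7,8,9},
    {0,1,2,3,4,5,6,8,9}, {0,1,2,3,4,5,6,7,9}, {0,1,2,3,4,5,6,7,8},
    {11,12,14,20,21,22,24,31,32,33,34,35},
    {10,12,15,20,21,22,25,30,31,33,34,35},
    {10,11,13,20,21,22,23,30,31,32,33,35},
    {14,15,23,24,25}, {13,15,23,24,25}, {13,14,23,24,25},
    {26},
    {10,14,16,20,24,26,27}, {11,15,16,21,25,26,28}, {12,13,16,22,23,26,29},
    {10,11,12,14,21,22,24,30,32,33,34,35},
    {10,11,12,15,20,22,25,30,31,32,34,35},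
    {10,11,12,13,20,21,23,30,31,32,33,34},
    {13}, {14}, {15}, {16},
    {10,14,16,17,20,24,26}, {11,15,16,18,21,25,26}, {12,13,16,19,22,23,26},
    {13,15,23,25,31}, {13,15,23,25,30},
    {13,14,23,24,33}, {13,14,23,24,32},
    {14,15,24,25,35}, {14,15,24,25,34}]

set_option maxHeartbeats 1000000 in
lemma I4eq : ∀ i, I4interf i = I4tab i := by decide

lemma I4notmem : ∀ i : Fin 36, i ∉ I4tab i := by decide

section Chord
variable {F : Type} [Field F] {E : Type} [AddCommGroup E] [Module F E]

theorem exists_chord (V0 V1 V3 : Submodule F E) (h : V0 ≤ V1 ⊔ V3) (hd : V1 ⊓ V3 = ⊥) :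
    ∃ c : V0 →ₗ[F] V1, ∀ x : V0, (x : E) - (c x : E) ∈ V3 := by
  classical
  set q := V3.mkQ with hq
  set f1 : V1 →ₗ[F] E ⧸ V3 := q.comp V1.subtype with hf1
  have hinj : Function.Injective f1 := by
    rw [← LinearMap.ker_eq_bot]
    ext ⟨x, hx⟩
    simp only [LinearMap.mem_ker, Submodule.mem_bot, hf1, hq, LinearMap.comp_apply,
      Submodule.mkQ_apply, Submodule.Quotient.mk_eq_zero, Submodule.coe_subtype]
    constructor
    · intro h3
      have hb : x ∈ V1 ⊓ V3 := ⟨hx, h3⟩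
      rw [hd] at hb
      exact Subtype.ext (by simpa using hb)
    · intro h0
      have hx0 : x = 0 := congrArg Subtype.val h0
      subst hx0
      exact V3.zero_mem
  set f0 : V0 →ₗ[F] E ⧸ V3 := q.comp V0.subtype with hf0
  have hrange : ∀ x : V0, f0 x ∈ LinearMap.range f1 := by
    rintro ⟨x, hx⟩
    obtain ⟨b, hb, c, hc, rfl⟩ := Submodule.mem_sup.mp (h hx)
    refine ⟨⟨b, hb⟩, ?_⟩
    simp only [hf1, hf0, hq, LinearMap.comp_apply, Submodule.coe_subtype, Submodule.mkQ_apply]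
    rw [Submodule.Quotient.eq]
    simpa using hc
  refine ⟨((LinearEquiv.ofInjective f1 hinj).symm.toLinearMap).comp
    (f0.codRestrict (LinearMap.range f1) hrange), fun x => ?_⟩
  rw [← Submodule.Quotient.eq V3]
  have key : ∀ y : LinearMap.range f1, f1 ((LinearEquiv.ofInjective f1 hinj).symm y) =
      (y : E ⧸ V3) := by
    intro y
    conv_rhs => rw [← LinearEquiv.apply_symm_apply (LinearEquiv.ofInjective f1 hinj) y]
    rw [LinearEquiv.ofInjective_apply]
  have : f1 (((LinearEquiv.ofInjective f1 hinj).symm.toLinearMap).comp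
      (f0.codRestrict (LinearMap.range f1) hrange) x) = f0 x := by
    rw [LinearMap.comp_apply]
    exact key (f0.codRestrict (LinearMap.range f1) hrange x)
  exact this.symm

theorem mem_inf_bot {A B : Submodule F E} (hd : A ⊓ B = ⊥) {x : E} (ha : x ∈ A) (hb : x ∈ B) :
    x = 0 := by
  have : x ∈ A ⊓ B := ⟨ha, hb⟩
  rw [hd] at this
  simpa using this

theorem triple_zero {W0 W1 W2 : Submodule F E} (h0 : W0 ⊓ (W1 ⊔ W2) = ⊥) (h12 : W1 ⊓ W2 = ⊥)
    {a b c : E} (ha : a ∈ W0) (hb : b ∈ W1) (hc : c ∈ W2) (h : a + b + c = 0) :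
    a = 0 ∧ b = 0 ∧ c = 0 := by
  have h' : a + (b + c) = 0 := by rw [← h]; abel
  have hane : a = -(b + c) := eq_neg_of_add_eq_zero_left h'
  have ha0 : a = 0 := by
    refine mem_inf_bot h0 ha ?_
    rw [hane]
    exact neg_mem (Submodule.add_mem_sup hb hc)
  have hbc : b + c = 0 := by rw [ha0] at h'; simpa using h'
  have hb0 : b = 0 := by
    refine mem_inf_bot h12 hb ?_
    rw [eq_neg_of_add_eq_zero_left hbc]
    exact neg_mem hc
  refine ⟨ha0, hb0, ?_⟩
  rw [ha0, hb0] at h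
  simpa using h

theorem graph_total {V0 V1 V3 : Submodule F E} (c : V0 →ₗ[F] V1)
    (hc : ∀ x : V0, (x : E) - (c x : E) ∈ V3) (ht : V3 ≤ V0 ⊔ V1) (hd : V1 ⊓ V3 = ⊥) :
    ∀ u : E, u ∈ V3 → ∃ w : V0, u = (w : E) - (c w : E) := by
  intro u hu
  obtain ⟨w, hw, y, hy, rfl⟩ := Submodule.mem_sup.mp (ht hu)
  refine ⟨⟨w, hw⟩, ?_⟩
  have h1 : (w + y) - ((w : E) - (c ⟨w, hw⟩ : E)) ∈ V3 := sub_mem hu (hc ⟨w, hw⟩)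
  have h2 : (w + y) - ((w : E) - (c ⟨w, hw⟩ : E)) ∈ V1 := by
    have : (w + y) - ((w : E) - (c ⟨w, hw⟩ : E)) = y + (c ⟨w, hw⟩ : E) := by abel
    rw [this]
    exact add_mem hy (SetLike.coe_mem _)
  have h3 := mem_inf_bot hd h2 h1
  rw [sub_eq_zero] at h3
  simpa using h3

end Chord

section LemB
variable {F : Type} [Field F] {E : Type} [AddCommGroup E] [Module F E] [FiniteDimensional F E]

theorem lemB (V0 V1 V2 V3 V4 V5 V6 : Submodule F E)
    (hr01 : finrank F V0 = finrank F V1) (hr02 : finrank F V0 = finrank F V2)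
    (hV0 : V0 ≠ ⊥)
    (h13 : V1 ⊓ V3 = ⊥) (h24 : V2 ⊓ V4 = ⊥) (h25 : V2 ⊓ V5 = ⊥) (h46 : V4 ⊓ V6 = ⊥)
    (h03 : V0 ⊓ V3 = ⊥) (h14 : V1 ⊓ V4 = ⊥) (h12v : V1 ⊓ V2 = ⊥)
    (h012 : V0 ⊓ (V1 ⊔ V2) = ⊥)
    (l0 : V0 ≤ V1 ⊔ V3) (l3 : V3 ≤ V0 ⊔ V1) (l1 : V1 ≤ V2 ⊔ V4) (l4 : V4 ≤ V1 ⊔ V2)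
    (l3' : V3 ≤ V2 ⊔ V5) (l5 : V5 ≤ V2 ⊔ V3) (l3'' : V3 ≤ V4 ⊔ V6) (l6 : V6 ≤ V3 ⊔ V4)
    (c4 : V0 ≤ V4 ⊔ V5) (c5 : V1 ≤ V5 ⊔ V6) (c6 : V2 ≤ V6 ⊔ V0) : (2 : F) = 0 := by
  obtain ⟨α, hα⟩ := exists_chord V0 V1 V3 l0 h13
  obtain ⟨β, hβ⟩ := exists_chord V1 V2 V4 l1 h24
  obtain ⟨δ, hδ⟩ := exists_chord V3 V2 V5 l3' h25
  obtain ⟨θ, hθ⟩ := exists_chord V3 V4 V6 l3'' h46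
  obtain ⟨μ, hμ⟩ := exists_chord V4 V1 V2 l4 h12v
  set Γ : V0 →ₗ[F] V3 :=
    LinearMap.codRestrict V3 (V0.subtype - V1.subtype.comp α) (fun x => by simpa using hα x)
    with hΓdef
  have hΓ : ∀ w : V0, (Γ w : E) = (w : E) - (α w : E) := fun w => rfl
  set A : V0 →ₗ[F] V1 := μ.comp (θ.comp Γ) with hAdef
  have hA : ∀ w : V0, A w = μ (θ (Γ w)) := fun w => rfl
  set NE : V0 →ₗ[F] E := (V4.subtype.comp (θ.comp Γ)) - (V1.subtype.comp A) with hNEdef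
  have hNE : ∀ w : V0, NE w = (θ (Γ w) : E) - (A w : E) := fun w => rfl
  have hNE2 : ∀ w : V0, NE w ∈ V2 := fun w => by rw [hNE, hA]; exact hμ (θ (Γ w))
  have hsplit : ∀ w : V0, (θ (Γ w) : E) = (A w : E) + NE w := fun w => by rw [hNE]; abel
  have P3 := graph_total α hα l3 h13
  have P4 := graph_total β hβ l4 h24
  have l5' : V5 ≤ V3 ⊔ V2 := by rwa [sup_comm] at l5
  have P5 := graph_total δ hδ l5' h25
  have P6 := graph_total θ hθ l6 h46
  have P5' : ∀ q : E, q ∈ V5 → ∃ w : V0, q = (Γ w : E) - (δ (Γ w) : E) := by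
    intro q hq
    obtain ⟨u, hu⟩ := P5 q hq
    obtain ⟨w, hw⟩ := P3 (u : E) u.2
    have huw : u = Γ w := Subtype.ext (by rw [hw, hΓ])
    exact ⟨w, by rw [hu, huw]⟩
  have P6' : ∀ s : E, s ∈ V6 → ∃ w : V0, s = (Γ w : E) - (θ (Γ w) : E) := by
    intro s hs
    obtain ⟨u, hu⟩ := P6 s hs
    obtain ⟨w, hw⟩ := P3 (u : E) u.2
    have huw : u = Γ w := Subtype.ext (by rw [hw, hΓ])
    exact ⟨w, by rw [hu, huw]⟩
  have L1 : ∀ w : V0, (δ (Γ w) : E) = -(β (α w) : E) := by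
    intro w
    obtain ⟨p, hp, q, hq, e⟩ := Submodule.mem_sup.mp (c4 w.2)
    obtain ⟨y, hy⟩ := P4 p hp
    obtain ⟨w', hw'⟩ := P5' q hq
    subst hy; subst hw'
    have e' : ((w' : E) - (w : E)) + ((y : E) - (α w' : E)) +
        (-(β y : E) - (δ (Γ w') : E)) = 0 := by
      rw [← sub_eq_zero] at e
      calc ((w' : E) - (w : E)) + ((y : E) - (α w' : E)) + (-(β y : E) - (δ (Γ w') : E))
          = ((y : E) - (β y : E)) + ((Γ w' : E) - (δ (Γ w') : E)) - (w : E) := by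
            rw [hΓ]; abel
        _ = 0 := e
    obtain ⟨e0, e1, e2⟩ := triple_zero h012 h12v
      (sub_mem (SetLike.coe_mem w') (SetLike.coe_mem w))
      (sub_mem (SetLike.coe_mem y) (SetLike.coe_mem (α w')))
      (sub_mem (neg_mem (SetLike.coe_mem (β y))) (SetLike.coe_mem (δ (Γ w')))) e'
    have hww : w' = w := Subtype.ext (by rw [← sub_eq_zero]; exact e0)
    subst hww
    have hyy : y = α w' := by
      refine Subtype.ext ?_
      rw [← sub_eq_zero]
      exact e1
    subst hyy
    rw [← sub_eq_zero]
    calc (δ (Γ w') : E) - -(β (α w') : E) = -(-(β (α w') : E) - (δ (Γ w') : E)) := by abel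
      _ = 0 := by rw [e2]; exact neg_zero
  have L2 : ∀ y0 : V1, ∃ w' : V0, (y0 : E) = -(A w' : E) ∧ NE w' = -(β (α w') : E) := by
    intro y0
    obtain ⟨p, hp, q, hq, e⟩ := Submodule.mem_sup.mp (c5 y0.2)
    obtain ⟨w, hw⟩ := P5' p hp
    obtain ⟨w', hw'⟩ := P6' q hq
    subst hw; subst hw'
    have e' : ((w : E) + (w' : E)) +
        ((-(α w : E) - (α w' : E) - (A w' : E)) - (y0 : E)) +
        (-(δ (Γ w) : E) - NE w') = 0 := by
      rw [← sub_eq_zero] at e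
      calc ((w : E) + (w' : E)) + ((-(α w : E) - (α w' : E) - (A w' : E)) - (y0 : E)) +
            (-(δ (Γ w) : E) - NE w')
          = ((Γ w : E) - (δ (Γ w) : E)) + ((Γ w' : E) - (θ (Γ w') : E)) - (y0 : E) := by
            rw [hsplit, hΓ, hΓ]; abel
        _ = 0 := e
    obtain ⟨e0, e1, e2⟩ := triple_zero h012 h12v
      (add_mem (SetLike.coe_mem w) (SetLike.coe_mem w'))
      (sub_mem (sub_mem (sub_mem (neg_mem (SetLike.coe_mem (α w))) (SetLike.coe_mem (α w')))
        (SetLike.coe_mem (A w'))) (SetLike.coe_mem y0))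
      (sub_mem (neg_mem (SetLike.coe_mem (δ (Γ w)))) (hNE2 w')) e'
    have hww : (w' : E) = -(w : E) := by
      rw [← sub_eq_zero]
      calc (w' : E) - -(w : E) = (w : E) + (w' : E) := by abel
        _ = 0 := e0
    have hw'w : w' = -w := Subtype.ext (by rw [hww]; simp)
    have hαw' : (α w' : E) = -(α w : E) := by rw [hw'w, map_neg]; simp
    have e1' : (y0 : E) = -(A w' : E) := by
      rw [← sub_eq_zero]
      calc (y0 : E) - -(A w' : E)
          = -((-(α w : E) - (α w' : E) - (A w' : E)) - (y0 : E)) +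
            (-(α w : E) - (α w' : E)) := by abel
        _ = 0 := by rw [e1, hαw']; abel
    have hδw : (δ (Γ w') : E) = -(δ (Γ w) : E) := by rw [hw'w, map_neg, map_neg]; simp
    have goal2 : NE w' = -(β (α w') : E) := by
      have hNEw' : NE w' = -(δ (Γ w) : E) := by
        rw [← sub_eq_zero]
        calc NE w' - -(δ (Γ w) : E) = -(-(δ (Γ w) : E) - NE w') := by abel
          _ = 0 := by rw [e2]; exact neg_zero
      rw [hNEw', ← L1 w', hδw]
    exact ⟨w', e1', goal2⟩
  have L3 : ∀ z : V2, ∃ w : V0, (z : E) = -(NE w) ∧ (A w : E) = -(α w : E) := by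
    intro z
    obtain ⟨p, hp, q, hq, e⟩ := Submodule.mem_sup.mp (c6 z.2)
    obtain ⟨w, hw⟩ := P6' p hp
    subst hw
    have e' : ((w : E) + q) + (-(α w : E) - (A w : E)) + (-(NE w) - (z : E)) = 0 := by
      rw [← sub_eq_zero] at e
      calc ((w : E) + q) + (-(α w : E) - (A w : E)) + (-(NE w) - (z : E))
          = ((Γ w : E) - (θ (Γ w) : E)) + q - (z : E) := by rw [hsplit, hΓ]; abel
        _ = 0 := e
    obtain ⟨e0, e1, e2⟩ := triple_zero h012 h12v
      (add_mem (SetLike.coe_mem w) hq)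
      (sub_mem (neg_mem (SetLike.coe_mem (α w))) (SetLike.coe_mem (A w)))
      (sub_mem (neg_mem (hNE2 w)) (SetLike.coe_mem z)) e'
    refine ⟨w, ?_, ?_⟩
    · rw [← sub_eq_zero]
      calc (z : E) - -(NE w) = -(-(NE w) - (z : E)) := by abel
        _ = 0 := by rw [e2]; exact neg_zero
    · rw [← sub_eq_zero]
      calc (A w : E) - -(α w : E) = -(-(α w : E) - (A w : E)) := by abel
        _ = 0 := by rw [e1]; exact neg_zero
  have L4 : ∀ w : V0, NE w = -(β (A w) : E) := by
    intro w
    obtain ⟨y, hy⟩ := P4 (θ (Γ w) : E) (SetLike.coe_mem (θ (Γ w)))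
    have d1 : (θ (Γ w) : E) - (A w : E) ∈ V2 := by
      have := hNE2 w
      rwa [hNE] at this
    have d2 : (θ (Γ w) : E) - (y : E) ∈ V2 := by
      rw [hy]
      have hh : ((y : E) - (β y : E)) - (y : E) = -(β y : E) := by abel
      rw [hh]
      exact neg_mem (SetLike.coe_mem _)
    have h1 : (y : E) - (A w : E) ∈ V2 := by
      have hh : (y : E) - (A w : E) =
          ((θ (Γ w) : E) - (A w : E)) - ((θ (Γ w) : E) - (y : E)) := by abel
      rw [hh]
      exact sub_mem d1 d2
    have h2 : (y : E) - (A w : E) ∈ V1 := sub_mem (SetLike.coe_mem y) (SetLike.coe_mem (A w))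
    have hyA : y = A w := by
      have := mem_inf_bot h12v h2 h1
      rw [sub_eq_zero] at this
      exact Subtype.ext this
    rw [hNE, hy, ← hyA]
    abel
  have hAsurj : Function.Surjective A := by
    intro y0
    obtain ⟨w', h1, _⟩ := L2 y0
    refine ⟨-w', Subtype.ext ?_⟩
    rw [map_neg]
    have : ((-(A w') : V1) : E) = -(A w' : E) := by simp
    rw [this, h1]
  have hAinj : Function.Injective A := by
    have hrk := LinearMap.finrank_range_add_finrank_ker A
    rw [LinearMap.range_eq_top.mpr hAsurj, finrank_top] at hrk
    have hker : finrank F (LinearMap.ker A) = 0 := by omega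
    rw [← LinearMap.ker_eq_bot]
    exact Submodule.finrank_eq_zero.mp hker
  have LN : ∀ w0 : V0, NE w0 = -(β (α w0) : E) := by
    intro w0
    obtain ⟨w', h1, h2⟩ := L2 (A (-w0))
    have h1' : -(A w0 : E) = -(A w' : E) := by
      rw [← h1, map_neg]
      simp
    have hww : w' = w0 := hAinj (Subtype.ext (neg_inj.mp h1'.symm))
    rwa [hww] at h2
  have hβinj : ∀ z : V1, β z = 0 → z = 0 := by
    intro z hz
    have h4 := hβ z
    rw [hz] at h4
    have h5 : (z : E) ∈ V4 := by simpa using h4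
    exact Subtype.ext (mem_inf_bot h14 z.2 h5)
  have hAα : ∀ w : V0, A w = α w := by
    intro w
    have h1 : -(β (A w) : E) = -(β (α w) : E) := (L4 w).symm.trans (LN w)
    have h2 : β (A w - α w) = 0 := by
      rw [map_sub]
      exact Subtype.ext (by rw [Submodule.coe_sub]; rw [neg_inj.mp h1]; simp)
    have h3 := hβinj _ h2
    rw [sub_eq_zero] at h3
    exact h3
  set M : V0 →ₗ[F] V2 := LinearMap.codRestrict V2 NE hNE2 with hMdef
  have hM : ∀ w : V0, (M w : E) = NE w := fun w => rfl
  have hMsurj : Function.Surjective M := by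
    intro z
    obtain ⟨w, h1, _⟩ := L3 z
    refine ⟨-w, Subtype.ext ?_⟩
    rw [hM, map_neg, h1]
  have hMinj : Function.Injective M := by
    have hrk := LinearMap.finrank_range_add_finrank_ker M
    rw [LinearMap.range_eq_top.mpr hMsurj, finrank_top] at hrk
    have hker : finrank F (LinearMap.ker M) = 0 := by omega
    rw [← LinearMap.ker_eq_bot]
    exact Submodule.finrank_eq_zero.mp hker
  have hAnegα : ∀ w0 : V0, (A w0 : E) = -(α w0 : E) := by
    intro w0
    obtain ⟨w, h1, h2⟩ := L3 (M (-w0))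
    have h1' : NE (-w0) = -(NE w) := by rw [← hM, h1]
    have hww : w = w0 := by
      apply hMinj
      apply Subtype.ext
      rw [hM, hM]
      rw [map_neg] at h1'
      exact (neg_inj.mp h1').symm
    rw [← hww]
    exact h2
  obtain ⟨x, hx, hx0⟩ := (Submodule.ne_bot_iff V0).mp hV0
  set xs : V0 := ⟨x, hx⟩ with hxs
  have hv : (α xs : E) = -(α xs : E) := by
    calc (α xs : E) = (A xs : E) := by rw [hAα xs]
      _ = -(α xs : E) := hAnegα xs
  have hvne : (α xs : E) ≠ 0 := by
    intro h0
    have hαz : α xs = 0 := Subtype.ext h0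
    have h4 := hα xs
    rw [hαz] at h4
    have h5 : x ∈ V3 := by simpa using h4
    exact hx0 (mem_inf_bot h03 hx h5)
  have h2v : (2 : F) • (α xs : E) = 0 := by
    rw [two_smul]
    calc (α xs : E) + (α xs : E) = (α xs : E) - -(α xs : E) := by abel
      _ = 0 := by rw [← hv]; exact sub_self _
  rcases smul_eq_zero.mp h2v with h | h
  · exact h
  · exact absurd h hvne

end LemB

section LemA
variable {F : Type} [Field F] {E : Type} [AddCommGroup E] [Module F E] [FiniteDimensional F E]

theorem lemA (A1 A2 A3 X Y Z G : Submodule F E) (d : ℕ)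
    (hd1 : finrank F A1 = d) (hd2 : finrank F A2 = d) (hd3 : finrank F A3 = d)
    (hdG : finrank F G = d)
    (h23 : A2 ⊓ A3 = ⊥) (h123 : A1 ⊓ (A2 ⊔ A3) = ⊥)
    (hX12 : X ≤ A1 ⊔ A2) (hXA2 : A2 ≤ A1 ⊔ X) (hXA1 : A1 ⊓ X = ⊥)
    (hY23 : Y ≤ A2 ⊔ A3) (hYA3 : A3 ≤ A2 ⊔ Y) (hYA2 : A2 ⊓ Y = ⊥)
    (hZ31 : Z ≤ A3 ⊔ A1) (hZA1 : A1 ≤ A3 ⊔ Z) (hZA3 : A3 ⊓ Z = ⊥)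
    (hG1 : G ≤ A1 ⊔ Y) (hG2 : G ≤ A2 ⊔ Z) (hG3 : G ≤ A3 ⊔ X) :
    X ⊓ Y = ⊥ ∧ ((2 : F) = 0 → finrank F (X ⊔ Y ⊔ Z : Submodule F E) ≤ 2 * d) := by
  obtain ⟨χ, hχ⟩ := exists_chord A2 A1 X hXA2 hXA1
  obtain ⟨η, hη⟩ := exists_chord A3 A2 Y hYA3 hYA2
  obtain ⟨ζ, hζ⟩ := exists_chord A1 A3 Z hZA1 hZA3
  have hX21 : X ≤ A2 ⊔ A1 := by rwa [sup_comm] at hX12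
  have hY32 : Y ≤ A3 ⊔ A2 := by rwa [sup_comm] at hY23
  have hZ13 : Z ≤ A1 ⊔ A3 := by rwa [sup_comm] at hZ31
  have PX := graph_total χ hχ hX21 hXA1
  have PY := graph_total η hη hY32 hYA2
  have PZ := graph_total ζ hζ hZ13 hZA3
  have hGW : G ≤ A1 ⊔ (A2 ⊔ A3) := le_trans hG1 (sup_le_sup_left hY23 A1)
  obtain ⟨π1, hπ1⟩ := exists_chord G A1 (A2 ⊔ A3) hGW h123
  -- structural relations for elements of G
  have Grel : ∀ g : G, ∃ v : A3, (g : E) = (π1 g : E) + ((v : E) - (η v : E)) ∧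
      (v : E) = -(ζ (π1 g) : E) ∧ (π1 g : E) = (χ (η v) : E) := by
    intro g
    obtain ⟨h0, hh0, yy, hyy, e1⟩ := Submodule.mem_sup.mp (hG1 g.2)
    obtain ⟨v, hv⟩ := PY yy hyy
    subst hv
    obtain ⟨b, hb, zz, hzz, e2⟩ := Submodule.mem_sup.mp (hG2 g.2)
    obtain ⟨w, hw⟩ := PZ zz hzz
    subst hw
    obtain ⟨cc, hcc, xx, hxx, e3⟩ := Submodule.mem_sup.mp (hG3 g.2)
    obtain ⟨a, ha⟩ := PX xx hxx
    subst ha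
    -- e1 : h0 + (v - ηv) = g ; e2 : b + (w - ζw) = g ; e3 : cc + (a - χa) = g
    have e12 : (h0 - (w : E)) + (-(η v : E) - b) + ((v : E) + (ζ w : E)) = 0 := by
      have e4 : (h0 + ((v : E) - (η v : E))) - (b + ((w : E) - (ζ w : E))) = 0 := by
        rw [e1, e2]; exact sub_self _
      calc (h0 - (w : E)) + (-(η v : E) - b) + ((v : E) + (ζ w : E))
          = (h0 + ((v : E) - (η v : E))) - (b + ((w : E) - (ζ w : E))) := by abel
        _ = 0 := e4
    obtain ⟨f0, f1, f2⟩ := triple_zero h123 h23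
      (sub_mem hh0 (SetLike.coe_mem w))
      (sub_mem (neg_mem (SetLike.coe_mem (η v))) hb)
      (add_mem (SetLike.coe_mem v) (SetLike.coe_mem (ζ w))) e12
    have e13 : (h0 + (χ a : E)) + (-(η v : E) - (a : E)) + ((v : E) - cc) = 0 := by
      have e4 : (h0 + ((v : E) - (η v : E))) - (cc + ((a : E) - (χ a : E))) = 0 := by
        rw [e1, e3]; exact sub_self _
      calc (h0 + (χ a : E)) + (-(η v : E) - (a : E)) + ((v : E) - cc)
          = (h0 + ((v : E) - (η v : E))) - (cc + ((a : E) - (χ a : E))) := by abel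
        _ = 0 := e4
    obtain ⟨g0, g1, g2⟩ := triple_zero h123 h23
      (add_mem hh0 (SetLike.coe_mem (χ a)))
      (sub_mem (neg_mem (SetLike.coe_mem (η v))) (SetLike.coe_mem a))
      (sub_mem (SetLike.coe_mem v) hcc) e13
    -- h0 = ↑(π1 g)
    have hπ : h0 = (π1 g : E) := by
      have m1 : (g : E) - h0 ∈ A2 ⊔ A3 := by
        have : (g : E) - h0 = (v : E) - (η v : E) := by rw [← e1]; abel
        rw [this]
        have hmm : (v : E) - (η v : E) = -(η v : E) + (v : E) := by abel
        rw [hmm]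
        exact Submodule.add_mem_sup (neg_mem (SetLike.coe_mem (η v))) (SetLike.coe_mem v)
      have m2 := hπ1 g
      have m3 : h0 - (π1 g : E) ∈ A2 ⊔ A3 := by
        have : h0 - (π1 g : E) = ((g : E) - (π1 g : E)) - ((g : E) - h0) := by abel
        rw [this]
        exact sub_mem m2 m1
      have m4 : h0 - (π1 g : E) ∈ A1 := sub_mem hh0 (SetLike.coe_mem (π1 g))
      have := mem_inf_bot h123 m4 m3
      rwa [sub_eq_zero] at this
    -- ↑w = h0
    have hwh : (w : E) = h0 := by
      have : h0 - (w : E) = 0 := f0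
      rw [sub_eq_zero] at this
      exact this.symm
    have hwπ : w = π1 g := Subtype.ext (hwh.trans hπ)
    refine ⟨v, ?_, ?_, ?_⟩
    · rw [← e1, hπ]
    · -- v = -ζ (π1 g)
      have : (v : E) = -(ζ w : E) := by
        rw [← sub_eq_zero]
        calc (v : E) - -(ζ w : E) = (v : E) + (ζ w : E) := by abel
          _ = 0 := f2
      rwa [hwπ] at this
    · -- π1 g = χ (η v)
      have ha' : (a : E) = -(η v : E) := by
        rw [← sub_eq_zero]
        calc (a : E) - -(η v : E) = -(-(η v : E) - (a : E)) := by abel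
          _ = 0 := by rw [g1]; exact neg_zero
      have haa : a = -(η v) := Subtype.ext (by rw [ha']; simp)
      have hχa : (χ a : E) = -(χ (η v) : E) := by rw [haa, map_neg]; simp
      have hh : h0 = -(χ a : E) := by
        rw [← sub_eq_zero]
        calc h0 - -(χ a : E) = h0 + (χ a : E) := by abel
          _ = 0 := g0
      rw [← hπ, hh, hχa, neg_neg]
  -- π1 is injective
  have hπinj : Function.Injective π1 := by
    rw [← LinearMap.ker_eq_bot]
    rw [Submodule.eq_bot_iff]
    intro g hg
    have hg0 : π1 g = 0 := hg
    obtain ⟨v, r1, r2, _⟩ := Grel g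
    rw [hg0] at r1 r2
    have hv0 : (v : E) = 0 := by simpa using r2
    have hv0' : v = 0 := Subtype.ext hv0
    have : (g : E) = 0 := by
      rw [r1, hv0']
      simp
    exact Subtype.ext this
  have hπsurj : Function.Surjective π1 := by
    rw [← LinearMap.range_eq_top]
    apply Submodule.eq_top_of_finrank_eq
    have hrk := LinearMap.finrank_range_add_finrank_ker π1
    rw [LinearMap.ker_eq_bot.mpr hπinj] at hrk
    simp only [finrank_bot, add_zero] at hrk
    rw [hrk, hdG, hd1]
  have R1 : ∀ h0 : A1, (χ (η (ζ h0)) : E) = -(h0 : E) := by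
    intro h0
    obtain ⟨g, hg⟩ := hπsurj h0
    obtain ⟨v, _, r2, r3⟩ := Grel g
    rw [hg] at r2 r3
    have hv : v = -(ζ h0) := Subtype.ext (by rw [r2]; simp)
    rw [hv, map_neg, map_neg] at r3
    have : (h0 : E) = -(χ (η (ζ h0)) : E) := by rw [r3]; simp
    rw [this, neg_neg]
  have hζinj : Function.Injective ζ := by
    rw [← LinearMap.ker_eq_bot, Submodule.eq_bot_iff]
    intro h0 hh0
    have hz : ζ h0 = 0 := hh0
    have := R1 h0
    rw [hz, map_zero, map_zero] at this
    have : (h0 : E) = 0 := by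
      rw [← neg_neg (h0 : E), ← this]
      simp
    exact Subtype.ext this
  have hζsurj : Function.Surjective ζ := by
    rw [← LinearMap.range_eq_top]
    apply Submodule.eq_top_of_finrank_eq
    have hrk := LinearMap.finrank_range_add_finrank_ker ζ
    rw [LinearMap.ker_eq_bot.mpr hζinj] at hrk
    simp only [finrank_bot, add_zero] at hrk
    rw [hrk, hd1, hd3]
  have R2 : ∀ v : A3, (ζ (χ (η v)) : E) = -(v : E) := by
    intro v
    obtain ⟨u, hu⟩ := hζsurj v
    have r1 : χ (η (ζ u)) = -u := Subtype.ext (by rw [R1 u]; simp)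
    rw [← hu, r1, map_neg, hu]
    simp
  constructor
  · -- X ⊓ Y = ⊥
    rw [Submodule.eq_bot_iff]
    intro x hx
    obtain ⟨hxX, hxY⟩ := hx
    obtain ⟨v, hv⟩ := PY x hxY
    obtain ⟨h, hh, b, hb, e⟩ := Submodule.mem_sup.mp (hX12 hxX)
    have e' : (-h) + (-(η v : E) - b) + (v : E) = 0 := by
      have e4 : ((v : E) - (η v : E)) - (h + b) = 0 := by rw [← hv, e]; exact sub_self _
      calc (-h) + (-(η v : E) - b) + (v : E) = ((v : E) - (η v : E)) - (h + b) := by abel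
        _ = 0 := e4
    obtain ⟨_, _, f2⟩ := triple_zero h123 h23 (neg_mem hh)
      (sub_mem (neg_mem (SetLike.coe_mem (η v))) hb) (SetLike.coe_mem v) e'
    have hv0 : v = 0 := Subtype.ext f2
    rw [hv, hv0]
    simp
  · -- char 2 bound
    intro hchar
    set φX : A2 →ₗ[F] E := A2.subtype - A1.subtype.comp χ with hφX
    set φY : A3 →ₗ[F] E := A3.subtype - A2.subtype.comp η with hφY
    set φZ : A1 →ₗ[F] E := A1.subtype - A3.subtype.comp ζ with hφZ
    have hφXap : ∀ a : A2, φX a = (a : E) - (χ a : E) := fun a => rfl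
    have hφYap : ∀ v : A3, φY v = (v : E) - (η v : E) := fun v => rfl
    have hφZap : ∀ w : A1, φZ w = (w : E) - (ζ w : E) := fun w => rfl
    have hrX : LinearMap.range φX = X := by
      apply le_antisymm
      · rintro x ⟨a, rfl⟩
        rw [hφXap]
        exact hχ a
      · intro x hx
        obtain ⟨a, ha⟩ := PX x hx
        exact ⟨a, ha.symm⟩
    have hrY : LinearMap.range φY = Y := by
      apply le_antisymm
      · rintro x ⟨v, rfl⟩
        rw [hφYap]
        exact hη v
      · intro x hx
        obtain ⟨v, hv⟩ := PY x hx
        exact ⟨v, hv.symm⟩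
    have hrZ : LinearMap.range φZ = Z := by
      apply le_antisymm
      · rintro x ⟨w, rfl⟩
        rw [hφZap]
        exact hζ w
      · intro x hx
        obtain ⟨w, hw⟩ := PZ x hx
        exact ⟨w, hw.symm⟩
    set Φ : (A2 × (A3 × A1)) →ₗ[F] E := φX.coprod (φY.coprod φZ) with hΦ
    have hrΦ : LinearMap.range Φ = X ⊔ (Y ⊔ Z) := by
      rw [hΦ, LinearMap.range_coprod, LinearMap.range_coprod, hrX, hrY, hrZ]
    set Ψ : A3 →ₗ[F] (A2 × (A3 × A1)) := η.prod (LinearMap.id.prod (χ.comp η)) with hΨ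
    have hΨker : ∀ v : A3, Φ (Ψ v) = 0 := by
      intro v
      have h1 : Φ (Ψ v) = φX (η v) + (φY v + φZ (χ (η v))) := rfl
      rw [h1, hφXap, hφYap, hφZap]
      have h2 : ((η v : E) - (χ (η v) : E)) + (((v : E) - (η v : E)) +
          ((χ (η v) : E) - (ζ (χ (η v)) : E))) = (v : E) - (ζ (χ (η v)) : E) := by abel
      rw [h2, R2 v]
      calc (v : E) - -(v : E) = (v : E) + (v : E) := by abel
        _ = (2 : F) • (v : E) := (two_smul F ((v : E))).symm
        _ = 0 := by rw [hchar, zero_smul]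
    have hΨinj : Function.Injective Ψ := by
      intro v v' hvv
      have := congrArg (fun p => p.2.1) hvv
      exact this
    have hrangeΨ : LinearMap.range Ψ ≤ LinearMap.ker Φ := by
      rintro p ⟨v, rfl⟩
      exact hΨker v
    have hkerd : d ≤ finrank F (LinearMap.ker Φ) := by
      have h1 : finrank F (LinearMap.range Ψ) = d := by
        have hrk := LinearMap.finrank_range_add_finrank_ker Ψ
        rw [LinearMap.ker_eq_bot.mpr hΨinj] at hrk
        simp only [finrank_bot, add_zero] at hrk
        rw [hrk, hd3]
      rw [← h1]
      exact Submodule.finrank_mono hrangeΨ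
    have hrkΦ := LinearMap.finrank_range_add_finrank_ker Φ
    have hdom : finrank F (A2 × (A3 × A1) : Type _) = d + (d + d) := by
      rw [Module.finrank_prod, Module.finrank_prod, hd1, hd2, hd3]
    rw [hdom] at hrkΦ
    have hXYZ : X ⊔ Y ⊔ Z = X ⊔ (Y ⊔ Z) := sup_assoc X Y Z
    rw [hXYZ, ← hrΦ]
    omega

end LemA


section KD
variable {F : Type} [Field F] {E : Type} [AddCommGroup E] [Module F E]

/-- The span of the blocks indexed by `L`. -/
def csD (U : Fin 36 → Submodule F E) (L : Finset (Fin 36)) : Submodule F E := L.sup U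

lemma csD_insert (U : Fin 36 → Submodule F E) (i : Fin 36) (L : Finset (Fin 36)) :
    csD U (insert i L) = U i ⊔ csD U L := Finset.sup_insert

lemma csD_singleton (U : Fin 36 → Submodule F E) (a : Fin 36) : csD U {a} = U a :=
  Finset.sup_singleton

lemma csD_pair (U : Fin 36 → Submodule F E) (a b : Fin 36) : csD U {a, b} = U a ⊔ U b := by
  rw [csD_insert, csD_singleton]

lemma csD_triple (U : Fin 36 → Submodule F E) (a b c : Fin 36) :
    csD U {a, b, c} = U a ⊔ (U b ⊔ U c) := by
  rw [csD_insert, csD_pair]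

lemma csD_union (U : Fin 36 → Submodule F E) (S T : Finset (Fin 36)) :
    csD U (S ∪ T) = csD U S ⊔ csD U T := Finset.sup_union

lemma csD_mono (U : Fin 36 → Submodule F E) {S T : Finset (Fin 36)} (h : S ⊆ T) :
    csD U S ≤ csD U T := Finset.sup_mono h

lemma csD_empty (U : Fin 36 → Submodule F E) : csD U ∅ = ⊥ := Finset.sup_empty

lemma csD_le_of_mem (U : Fin 36 → Submodule F E) {a : Fin 36} {S : Finset (Fin 36)}
    (h : a ∈ S) : U a ≤ csD U S := Finset.le_sup h

/-- Dimension of the span of the blocks indexed by `L`. -/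
noncomputable def fD (U : Fin 36 → Submodule F E) (L : Finset (Fin 36)) : ℕ :=
  finrank F (csD U L)

lemma fD_def (U : Fin 36 → Submodule F E) (L : Finset (Fin 36)) :
    fD U L = finrank F (csD U L) := rfl

/-- The key property derived from the decoding conditions. -/
def KH (U : Fin 36 → Submodule F E) (t : ℕ) : Prop :=
  ∀ (i : Fin 36) (M : Finset (Fin 36)), M ⊆ I4tab i →
    finrank F ((U i ⊔ csD U M : Submodule F E)) = fD U M + t

variable [FiniteDimensional F E]

lemma fsubD (U : Fin 36 → Submodule F E) (X Y : Finset (Fin 36)) :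
    fD U (X ∪ Y) + fD U (X ∩ Y) ≤ fD U X + fD U Y := by
  have h1 := Submodule.finrank_sup_add_finrank_inf_eq (csD U X) (csD U Y)
  rw [← csD_union] at h1
  have h2 : csD U (X ∩ Y) ≤ csD U X ⊓ csD U Y :=
    le_inf (csD_mono U Finset.inter_subset_left) (csD_mono U Finset.inter_subset_right)
  have h4 : fD U (X ∩ Y) ≤ finrank F ((csD U X ⊓ csD U Y : Submodule F E)) :=
    Submodule.finrank_mono h2
  rw [fD_def, fD_def, fD_def, fD_def]
  rw [fD_def] at h4
  omega

lemma fD_mono (U : Fin 36 → Submodule F E) {S T : Finset (Fin 36)} (h : S ⊆ T) :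
    fD U S ≤ fD U T := Submodule.finrank_mono (csD_mono U h)

variable {U : Fin 36 → Submodule F E} {t : ℕ}

lemma K2D (hK : KH U t) : ∀ i, finrank F (U i) = t := by
  intro i
  have h := hK i ∅ (Finset.empty_subset _)
  rw [csD_empty, sup_bot_eq, fD_def, csD_empty] at h
  rw [h]
  simp

lemma K3D (hK : KH U t) : ∀ (i : Fin 36) (M : Finset (Fin 36)), M ⊆ I4tab i →
    U i ⊓ csD U M = ⊥ := by
  intro i M hM
  have h1 := Submodule.finrank_sup_add_finrank_inf_eq (U i) (csD U M)
  rw [hK i M hM, K2D hK i, fD_def] at h1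
  have h2 : finrank F ((U i ⊓ csD U M : Submodule F E)) = 0 := by omega
  exact Submodule.finrank_eq_zero.mp h2

lemma pairD (hK : KH U t) {i j : Fin 36} (hj : j ∈ I4tab i) : U i ⊓ U j = ⊥ := by
  have h := K3D hK i {j} (Finset.singleton_subset_iff.mpr hj)
  rwa [csD_singleton] at h

lemma pairrD (hK : KH U t) {i j : Fin 36} (hi : i ∈ I4tab j) : U i ⊓ U j = ⊥ := by
  rw [inf_comm]
  exact pairD hK hi

lemma supdimD (hK : KH U t) {a b : Fin 36} (hab : U a ⊓ U b = ⊥) :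
    finrank F ((U a ⊔ U b : Submodule F E)) = t + t := by
  have h := Submodule.finrank_sup_add_finrank_inf_eq (U a) (U b)
  rw [hab, K2D hK a, K2D hK b] at h
  have h2 : finrank F ((⊥ : Submodule F E)) = 0 := finrank_bot F E
  omega

end KD

section Parts
variable {F : Type} [Field F] {E : Type} [AddCommGroup E] [Module F E] [FiniteDimensional F E]
variable {U : Fin 36 → Submodule F E} {t : ℕ}

set_option maxHeartbeats 1000000 in
lemma partB (hK : KH U t) (hfle : ∀ L, fD U L ≤ 6 * t) (ht : 0 < t) : (2 : F) = 0 := by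
  have hdec' : ∀ i : Fin 36, fD U (insert i (I4tab i)) = fD U (I4tab i) + t := by
    intro i
    rw [fD_def, csD_insert]
    exact hK i (I4tab i) (le_refl _)
  have e7 : fD U {0,1,2,3,4,5,6,7,8,9} = fD U {0,1,2,3,4,5,6,8,9} + t := by
    have h := hdec' 7
    rw [show (insert (7:Fin 36) (I4tab 7)) = ({0,1,2,3,4,5,6,7,8,9}:Finset (Fin 36))
      from by decide] at h
    rw [show I4tab (7:Fin 36) = ({0,1,2,3,4,5,6,8,9}:Finset (Fin 36)) from by decide] at h
    exact h
  have e8 : fD U {0,1,2,3,4,5,6,7,8,9} = fD U {0,1,2,3,4,5,6,7,9} + t := by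
    have h := hdec' 8
    rw [show (insert (8:Fin 36) (I4tab 8)) = ({0,1,2,3,4,5,6,7,8,9}:Finset (Fin 36))
      from by decide] at h
    rw [show I4tab (8:Fin 36) = ({0,1,2,3,4,5,6,7,9}:Finset (Fin 36)) from by decide] at h
    exact h
  have e9 : fD U {0,1,2,3,4,5,6,7,8,9} = fD U {0,1,2,3,4,5,6,7,8} + t := by
    have h := hdec' 9
    rw [show (insert (9:Fin 36) (I4tab 9)) = ({0,1,2,3,4,5,6,7,8,9}:Finset (Fin 36))
      from by decide] at h
    rw [show I4tab (9:Fin 36) = ({0,1,2,3,4,5,6,7,8}:Finset (Fin 36)) from by decide] at h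
    exact h
  have s1 := fsubD U ({0,1,2,3,4,5,6,8,9}:Finset (Fin 36)) ({0,1,2,3,4,5,6,7,9}:Finset (Fin 36))
  rw [show ({0,1,2,3,4,5,6,8,9}:Finset (Fin 36)) ∪ {0,1,2,3,4,5,6,7,9}
        = {0,1,2,3,4,5,6,7,8,9} from by decide,
     show ({0,1,2,3,4,5,6,8,9}:Finset (Fin 36)) ∩ {0,1,2,3,4,5,6,7,9}
        = {0,1,2,3,4,5,6,9} from by decide] at s1
  have s2 := fsubD U ({0,1,2,3,4,5,6,9}:Finset (Fin 36)) ({0,1,2,3,4,5,6,7,8}:Finset (Fin 36))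
  rw [show ({0,1,2,3,4,5,6,9}:Finset (Fin 36)) ∪ {0,1,2,3,4,5,6,7,8}
        = {0,1,2,3,4,5,6,7,8,9} from by decide,
     show ({0,1,2,3,4,5,6,9}:Finset (Fin 36)) ∩ {0,1,2,3,4,5,6,7,8}
        = {0,1,2,3,4,5,6} from by decide] at s2
  have h3t : fD U {0,1,2,3,4,5,6} + 3 * t ≤ 6 * t := by
    have := hfle ({0,1,2,3,4,5,6,7,8,9}:Finset (Fin 36))
    omega
  have tri : ∀ i a b c : Fin 36, ({a,b,c} : Finset (Fin 36)) ⊆ I4tab i →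
      U i ⊔ csD U {a,b,c} ≤ csD U {0,1,2,3,4,5,6} →
      U a ⊓ U b = ⊥ → csD U {a,b,c} = U a ⊔ U b := by
    intro i a b c hB hle hab
    have h1 := hK i _ hB
    have h3 : finrank F ((U i ⊔ csD U {a,b,c} : Submodule F E))
        ≤ fD U {0,1,2,3,4,5,6} := Submodule.finrank_mono hle
    have h4 : U a ⊔ U b ≤ csD U {a,b,c} := by
      rw [csD_triple]
      exact sup_le le_sup_left (le_sup_of_le_right le_sup_left)
    have h5 := supdimD hK hab
    have h6 := Submodule.finrank_mono h4
    have h9 : fD U {a,b,c} = finrank F (csD U {a,b,c}) := rfl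
    rw [h5] at h6
    exact (Submodule.eq_of_le_of_finrank_le h4 (by omega)).symm
  have getle : ∀ i a b c : Fin 36, ({a,b,c} : Finset (Fin 36)) ⊆ I4tab i →
      i ∈ ({0,1,2,3,4,5,6}:Finset (Fin 36)) →
      ({a,b,c} : Finset (Fin 36)) ⊆ {0,1,2,3,4,5,6} →
      U a ⊓ U b = ⊥ → U c ≤ U a ⊔ U b := by
    intro i a b c h1 h2 h3 h4
    have hle : U i ⊔ csD U {a,b,c} ≤ csD U {0,1,2,3,4,5,6} :=
      sup_le (csD_le_of_mem U h2) (csD_mono U h3)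
    rw [← tri i a b c h1 hle h4, csD_triple]
    exact le_sup_of_le_right le_sup_right
  have hl0 : U 0 ≤ U 1 ⊔ U 3 :=
    getle 5 1 3 0 (by decide) (by decide) (by decide) (pairD hK (by decide))
  have hl3 : U 3 ≤ U 0 ⊔ U 1 :=
    getle 5 0 1 3 (by decide) (by decide) (by decide) (pairD hK (by decide))
  have hl1 : U 1 ≤ U 2 ⊔ U 4 :=
    getle 0 2 4 1 (by decide) (by decide) (by decide) (pairD hK (by decide))
  have hl4 : U 4 ≤ U 1 ⊔ U 2 :=
    getle 0 1 2 4 (by decide) (by decide) (by decide) (pairD hK (by decide))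
  have hl3' : U 3 ≤ U 2 ⊔ U 6 :=
    getle 1 2 6 3 (by decide) (by decide) (by decide) (pairrD hK (by decide))
  have hl5 : U 6 ≤ U 2 ⊔ U 3 :=
    getle 1 2 3 6 (by decide) (by decide) (by decide) (pairD hK (by decide))
  have hl3'' : U 3 ≤ U 4 ⊔ U 5 :=
    getle 2 4 5 3 (by decide) (by decide) (by decide) (pairD hK (by decide))
  have hl6 : U 5 ≤ U 3 ⊔ U 4 :=
    getle 2 3 4 5 (by decide) (by decide) (by decide) (pairD hK (by decide))
  have hc4 : U 0 ≤ U 4 ⊔ U 6 :=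
    getle 3 4 6 0 (by decide) (by decide) (by decide) (pairD hK (by decide))
  have hc5 : U 1 ≤ U 6 ⊔ U 5 :=
    getle 4 6 5 1 (by decide) (by decide) (by decide) (pairD hK (by decide))
  have hc6 : U 2 ≤ U 5 ⊔ U 0 :=
    getle 6 5 0 2 (by decide) (by decide) (by decide) (pairD hK (by decide))
  have h012 : U 0 ⊓ (U 1 ⊔ U 2) = ⊥ := by
    have h := K3D hK 0 {1,2} (by decide)
    rwa [csD_pair] at h
  have hV0ne : U 0 ≠ ⊥ := by
    intro hb
    have h := K2D hK 0
    rw [hb] at h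
    rw [finrank_bot] at h
    omega
  exact lemB (U 0) (U 1) (U 2) (U 3) (U 4) (U 6) (U 5)
    (by rw [K2D hK, K2D hK]) (by rw [K2D hK, K2D hK]) hV0ne
    (pairD hK (by decide)) (pairD hK (by decide)) (pairrD hK (by decide))
    (pairD hK (by decide)) (pairrD hK (by decide)) (pairrD hK (by decide))
    (pairD hK (by decide)) h012
    hl0 hl3 hl1 hl4 hl3' hl5 hl3'' hl6 hc4 hc5 hc6


set_option maxHeartbeats 2000000 in
lemma partA (hchar : (2 : F) = 0) (hK : KH U t) (hfle : ∀ L, fD U L ≤ 6 * t) (ht : 0 < t) : False := by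
  have hmutK : ∀ a ∈ ({10,11,12,20,21,22} : Finset (Fin 36)),
      ({10,11,12,20,21,22} : Finset (Fin 36)).erase a ⊆ I4tab a := by decide
  have hcardK : ∀ S : Finset (Fin 36), S ⊆ {10,11,12,20,21,22} → fD U S = t * S.card := by
    intro S
    induction S using Finset.induction_on with
    | empty =>
      intro _
      have h1 : csD U (∅ : Finset (Fin 36)) = ⊥ := csD_empty U
      show finrank F ((csD U (∅ : Finset (Fin 36)) : Submodule F E)) = _
      rw [h1]
      simp
    | @insert a S ha ih =>
      intro hsub
      have haK : a ∈ ({10,11,12,20,21,22} : Finset (Fin 36)) :=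
        hsub (Finset.mem_insert_self a S)
      have hSB : S ⊆ I4tab a := by
        intro x hx
        refine hmutK a haK (Finset.mem_erase.mpr ⟨?_, hsub (Finset.mem_insert_of_mem hx)⟩)
        intro he
        exact ha (he ▸ hx)
      have h6 : fD U (insert a S) = finrank F ((U a ⊔ csD U S : Submodule F E)) := by
        show finrank F ((csD U (insert a S) : Submodule F E)) = _
        rw [csD_insert U]
      rw [h6, hK a S hSB, ih (fun x hx => hsub (Finset.mem_insert_of_mem hx)),
        Finset.card_insert_of_notMem ha]
      ring
  have hinfK : ∀ S T : Finset (Fin 36), S ⊆ {10,11,12,20,21,22} →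
      T ⊆ {10,11,12,20,21,22} → csD U S ⊓ csD U T = csD U (S ∩ T) := by
    intro S T hS hT
    have h1 := Submodule.finrank_sup_add_finrank_inf_eq (csD U S) (csD U T)
    have h1' : csD U (S ∪ T) = csD U S ⊔ csD U T := csD_union U _ _
    rw [← h1'] at h1
    have h2 : csD U (S ∩ T) ≤ csD U S ⊓ csD U T :=
      le_inf (csD_mono U Finset.inter_subset_left)
        (csD_mono U Finset.inter_subset_right)
    have h3 := hcardK S hS
    have h4 := hcardK T hT
    have h5 := hcardK (S ∪ T) (Finset.union_subset hS hT)
    have h6 := hcardK (S ∩ T) (fun x hx => hS (Finset.mem_of_mem_inter_left hx))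
    have hc := Finset.card_union_add_card_inter S T
    have h8 : fD U (S ∪ T) + fD U (S ∩ T) = fD U S + fD U T := by
      rw [h3, h4, h5, h6, ← Nat.mul_add, ← Nat.mul_add, hc]
    have hfS : fD U S = finrank F (csD U S) := rfl
    have hfT : fD U T = finrank F (csD U T) := rfl
    have hfU : fD U (S ∪ T) = finrank F (csD U (S ∪ T)) := rfl
    have hfI : fD U (S ∩ T) = finrank F (csD U (S ∩ T)) := rfl
    exact (Submodule.eq_of_le_of_finrank_le h2 (by omega)).symm
  have hfBle : ∀ i : Fin 36, fD U (I4tab i) + t ≤ 6 * t := by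
    intro i
    have h := hK i (I4tab i) (le_refl _)
    have h2 : fD U (insert i (I4tab i)) = finrank F ((U i ⊔ csD U (I4tab i) : Submodule F E)) := by
      rw [fD_def, csD_insert U]
    have h3 := hfle (insert i (I4tab i))
    omega
  have hypK : ∀ i ∈ ({10,11,12,20,21,22} : Finset (Fin 36)),
      csD U (I4tab i) = csD U (({10,11,12,20,21,22} : Finset (Fin 36)).erase i) := by
    intro i hi
    have h2 : csD U (({10,11,12,20,21,22} : Finset (Fin 36)).erase i) ≤ csD U (I4tab i) :=
      csD_mono U (hmutK i hi)
    have h3 := hfBle i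
    have h4 : fD U (({10,11,12,20,21,22} : Finset (Fin 36)).erase i) = t * 5 := by
      rw [hcardK _ (Finset.erase_subset _ _), Finset.card_erase_of_mem hi,
        show ({10,11,12,20,21,22} : Finset (Fin 36)).card = 6 from by decide]
    have h5 : fD U (I4tab i) = finrank F (csD U (I4tab i)) := rfl
    have h6 : fD U (({10,11,12,20,21,22} : Finset (Fin 36)).erase i) =
        finrank F (csD U (({10,11,12,20,21,22} : Finset (Fin 36)).erase i)) := rfl
    exact (Submodule.eq_of_le_of_finrank_le h2 (by omega)).symm
  have hUH : ∀ (j i : Fin 36) (S : Finset (Fin 36)),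
      i ∈ ({10,11,12,20,21,22} : Finset (Fin 36)) → j ∈ I4tab i →
      ({10,11,12,20,21,22} : Finset (Fin 36)).erase i = S → U j ≤ csD U S := by
    intro j i S hi hj hS
    rw [← hS, ← hypK i hi]
    exact csD_le_of_mem U hj
  have step2 : ∀ (j : Fin 36) (T1 T2 T3 : Finset (Fin 36)), T1 ⊆ {10,11,12,20,21,22} →
      T2 ⊆ {10,11,12,20,21,22} → T1 ∩ T2 = T3 → U j ≤ csD U T1 → U j ≤ csD U T2 → U j ≤ csD U T3 := by
    intro j T1 T2 T3 h1 h2 h3 l1 l2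
    rw [← h3, ← hinfK T1 T2 h1 h2]
    exact le_inf l1 l2
  have c30 : U 30 = U 10 := by
    have a1 : U 30 ≤ csD U {10,12,20,21,22} := hUH 30 11 _ (by decide) (by decide) (by decide)
    have a2 : U 30 ≤ csD U {10,11,20,21,22} := hUH 30 12 _ (by decide) (by decide) (by decide)
    have a3 : U 30 ≤ csD U {10,11,12,21,22} := hUH 30 20 _ (by decide) (by decide) (by decide)
    have a4 : U 30 ≤ csD U {10,11,12,20,22} := hUH 30 21 _ (by decide) (by decide) (by decide)
    have a5 : U 30 ≤ csD U {10,11,12,20,21} := hUH 30 22 _ (by decide) (by decide) (by decide)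
    have b1 := step2 30 _ _ {10,20,21,22} (by decide) (by decide) (by decide) a1 a2
    have b2 := step2 30 _ _ {10,21,22} (by decide) (by decide) (by decide) b1 a3
    have b3 := step2 30 _ _ {10,22} (by decide) (by decide) (by decide) b2 a4
    have b4 := step2 30 _ _ {10} (by decide) (by decide) (by decide) b3 a5
    rw [csD_singleton U] at b4
    exact Submodule.eq_of_le_of_finrank_le b4 (by rw [K2D hK, K2D hK])
  have c31 : U 31 = U 20 := by
    have a1 : U 31 ≤ csD U {11,12,20,21,22} := hUH 31 10 _ (by decide) (by decide) (by decide)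
    have a2 : U 31 ≤ csD U {10,12,20,21,22} := hUH 31 11 _ (by decide) (by decide) (by decide)
    have a3 : U 31 ≤ csD U {10,11,20,21,22} := hUH 31 12 _ (by decide) (by decide) (by decide)
    have a4 : U 31 ≤ csD U {10,11,12,20,22} := hUH 31 21 _ (by decide) (by decide) (by decide)
    have a5 : U 31 ≤ csD U {10,11,12,20,21} := hUH 31 22 _ (by decide) (by decide) (by decide)
    have b1 := step2 31 _ _ {12,20,21,22} (by decide) (by decide) (by decide) a1 a2
    have b2 := step2 31 _ _ {20,21,22} (by decide) (by decide) (by decide) b1 a3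
    have b3 := step2 31 _ _ {20,22} (by decide) (by decide) (by decide) b2 a4
    have b4 := step2 31 _ _ {20} (by decide) (by decide) (by decide) b3 a5
    rw [csD_singleton U] at b4
    exact Submodule.eq_of_le_of_finrank_le b4 (by rw [K2D hK, K2D hK])
  have c32 : U 32 = U 11 := by
    have a1 : U 32 ≤ csD U {11,12,20,21,22} := hUH 32 10 _ (by decide) (by decide) (by decide)
    have a2 : U 32 ≤ csD U {10,11,20,21,22} := hUH 32 12 _ (by decide) (by decide) (by decide)
    have a3 : U 32 ≤ csD U {10,11,12,21,22} := hUH 32 20 _ (by decide) (by decide) (by decide)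
    have a4 : U 32 ≤ csD U {10,11,12,20,22} := hUH 32 21 _ (by decide) (by decide) (by decide)
    have a5 : U 32 ≤ csD U {10,11,12,20,21} := hUH 32 22 _ (by decide) (by decide) (by decide)
    have b1 := step2 32 _ _ {11,20,21,22} (by decide) (by decide) (by decide) a1 a2
    have b2 := step2 32 _ _ {11,21,22} (by decide) (by decide) (by decide) b1 a3
    have b3 := step2 32 _ _ {11,22} (by decide) (by decide) (by decide) b2 a4
    have b4 := step2 32 _ _ {11} (by decide) (by decide) (by decide) b3 a5
    rw [csD_singleton U] at b4
    exact Submodule.eq_of_le_of_finrank_le b4 (by rw [K2D hK, K2D hK])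
  have c33 : U 33 = U 21 := by
    have a1 : U 33 ≤ csD U {11,12,20,21,22} := hUH 33 10 _ (by decide) (by decide) (by decide)
    have a2 : U 33 ≤ csD U {10,12,20,21,22} := hUH 33 11 _ (by decide) (by decide) (by decide)
    have a3 : U 33 ≤ csD U {10,11,20,21,22} := hUH 33 12 _ (by decide) (by decide) (by decide)
    have a4 : U 33 ≤ csD U {10,11,12,21,22} := hUH 33 20 _ (by decide) (by decide) (by decide)
    have a5 : U 33 ≤ csD U {10,11,12,20,21} := hUH 33 22 _ (by decide) (by decide) (by decide)
    have b1 := step2 33 _ _ {12,20,21,22} (by decide) (by decide) (by decide) a1 a2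
    have b2 := step2 33 _ _ {20,21,22} (by decide) (by decide) (by decide) b1 a3
    have b3 := step2 33 _ _ {21,22} (by decide) (by decide) (by decide) b2 a4
    have b4 := step2 33 _ _ {21} (by decide) (by decide) (by decide) b3 a5
    rw [csD_singleton U] at b4
    exact Submodule.eq_of_le_of_finrank_le b4 (by rw [K2D hK, K2D hK])
  have c34 : U 34 = U 12 := by
    have a1 : U 34 ≤ csD U {11,12,20,21,22} := hUH 34 10 _ (by decide) (by decide) (by decide)
    have a2 : U 34 ≤ csD U {10,12,20,21,22} := hUH 34 11 _ (by decide) (by decide) (by decide)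
    have a3 : U 34 ≤ csD U {10,11,12,21,22} := hUH 34 20 _ (by decide) (by decide) (by decide)
    have a4 : U 34 ≤ csD U {10,11,12,20,22} := hUH 34 21 _ (by decide) (by decide) (by decide)
    have a5 : U 34 ≤ csD U {10,11,12,20,21} := hUH 34 22 _ (by decide) (by decide) (by decide)
    have b1 := step2 34 _ _ {12,20,21,22} (by decide) (by decide) (by decide) a1 a2
    have b2 := step2 34 _ _ {12,21,22} (by decide) (by decide) (by decide) b1 a3
    have b3 := step2 34 _ _ {12,22} (by decide) (by decide) (by decide) b2 a4
    have b4 := step2 34 _ _ {12} (by decide) (by decide) (by decide) b3 a5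
    rw [csD_singleton U] at b4
    exact Submodule.eq_of_le_of_finrank_le b4 (by rw [K2D hK, K2D hK])
  have c35 : U 35 = U 22 := by
    have a1 : U 35 ≤ csD U {11,12,20,21,22} := hUH 35 10 _ (by decide) (by decide) (by decide)
    have a2 : U 35 ≤ csD U {10,12,20,21,22} := hUH 35 11 _ (by decide) (by decide) (by decide)
    have a3 : U 35 ≤ csD U {10,11,20,21,22} := hUH 35 12 _ (by decide) (by decide) (by decide)
    have a4 : U 35 ≤ csD U {10,11,12,21,22} := hUH 35 20 _ (by decide) (by decide) (by decide)
    have a5 : U 35 ≤ csD U {10,11,12,20,22} := hUH 35 21 _ (by decide) (by decide) (by decide)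
    have b1 := step2 35 _ _ {12,20,21,22} (by decide) (by decide) (by decide) a1 a2
    have b2 := step2 35 _ _ {20,21,22} (by decide) (by decide) (by decide) b1 a3
    have b3 := step2 35 _ _ {21,22} (by decide) (by decide) (by decide) b2 a4
    have b4 := step2 35 _ _ {22} (by decide) (by decide) (by decide) b3 a5
    rw [csD_singleton U] at b4
    exact Submodule.eq_of_le_of_finrank_le b4 (by rw [K2D hK, K2D hK])
  -- locations of the line spaces
  have x13 : U 13 ≤ csD U {10,11,20,21} := by
    have a1 : U 13 ≤ csD U {10,11,20,21,22} := hUH 13 12 _ (by decide) (by decide) (by decide)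
    have a2 : U 13 ≤ csD U {10,11,12,20,21} := hUH 13 22 _ (by decide) (by decide) (by decide)
    exact step2 13 _ _ {10,11,20,21} (by decide) (by decide) (by decide) a1 a2
  have x23 : U 23 ≤ csD U {10,11,20,21} := by
    have a1 : U 23 ≤ csD U {10,11,20,21,22} := hUH 23 12 _ (by decide) (by decide) (by decide)
    have a2 : U 23 ≤ csD U {10,11,12,20,21} := hUH 23 22 _ (by decide) (by decide) (by decide)
    exact step2 23 _ _ {10,11,20,21} (by decide) (by decide) (by decide) a1 a2
  have y14 : U 14 ≤ csD U {11,12,21,22} := by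
    have a1 : U 14 ≤ csD U {11,12,20,21,22} := hUH 14 10 _ (by decide) (by decide) (by decide)
    have a2 : U 14 ≤ csD U {10,11,12,21,22} := hUH 14 20 _ (by decide) (by decide) (by decide)
    exact step2 14 _ _ {11,12,21,22} (by decide) (by decide) (by decide) a1 a2
  have y24 : U 24 ≤ csD U {11,12,21,22} := by
    have a1 : U 24 ≤ csD U {11,12,20,21,22} := hUH 24 10 _ (by decide) (by decide) (by decide)
    have a2 : U 24 ≤ csD U {10,11,12,21,22} := hUH 24 20 _ (by decide) (by decide) (by decide)
    exact step2 24 _ _ {11,12,21,22} (by decide) (by decide) (by decide) a1 a2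
  have z15 : U 15 ≤ csD U {10,12,20,22} := by
    have a1 : U 15 ≤ csD U {10,12,20,21,22} := hUH 15 11 _ (by decide) (by decide) (by decide)
    have a2 : U 15 ≤ csD U {10,11,12,20,22} := hUH 15 21 _ (by decide) (by decide) (by decide)
    exact step2 15 _ _ {10,12,20,22} (by decide) (by decide) (by decide) a1 a2
  have z25 : U 25 ≤ csD U {10,12,20,22} := by
    have a1 : U 25 ≤ csD U {10,12,20,21,22} := hUH 25 11 _ (by decide) (by decide) (by decide)
    have a2 : U 25 ≤ csD U {10,11,12,20,22} := hUH 25 21 _ (by decide) (by decide) (by decide)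
    exact step2 25 _ _ {10,12,20,22} (by decide) (by decide) (by decide) a1 a2
  -- dimensions of the doubled spaces
  have dA1 : finrank F ((U 10 ⊔ U 20 : Submodule F E)) = t + t :=
    supdimD hK (pairD hK (by decide))
  have dA2 : finrank F ((U 11 ⊔ U 21 : Submodule F E)) = t + t :=
    supdimD hK (pairD hK (by decide))
  have dA3 : finrank F ((U 12 ⊔ U 22 : Submodule F E)) = t + t :=
    supdimD hK (pairD hK (by decide))
  have dG : finrank F ((U 16 ⊔ U 26 : Submodule F E)) = t + t :=
    supdimD hK (pairD hK (by decide))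
  have dX : finrank F ((U 13 ⊔ U 23 : Submodule F E)) = t + t :=
    supdimD hK (pairD hK (by decide))
  have dY : finrank F ((U 14 ⊔ U 24 : Submodule F E)) = t + t :=
    supdimD hK (pairD hK (by decide))
  have dZ : finrank F ((U 15 ⊔ U 25 : Submodule F E)) = t + t :=
    supdimD hK (pairD hK (by decide))
  -- quad decompositions
  have quad : ∀ a b c d : Fin 36, csD U {a,b,c,d} = (U a ⊔ U b) ⊔ (U c ⊔ U d) := by
    intro a b c d
    rw [csD_insert U, csD_insert U, csD_pair U]
    exact (sup_assoc _ _ _).symm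
  have hPeq : csD U ({10,11,20,21} : Finset (Fin 36)) = (U 10 ⊔ U 20) ⊔ (U 11 ⊔ U 21) := by
    rw [show ({10,11,20,21} : Finset (Fin 36)) = {10,20,11,21} from by decide, quad]
  have hQeq : csD U ({11,12,21,22} : Finset (Fin 36)) = (U 11 ⊔ U 21) ⊔ (U 12 ⊔ U 22) := by
    rw [show ({11,12,21,22} : Finset (Fin 36)) = {11,21,12,22} from by decide, quad]
  have hReq : csD U ({10,12,20,22} : Finset (Fin 36)) = (U 12 ⊔ U 22) ⊔ (U 10 ⊔ U 20) := by
    rw [show ({10,12,20,22} : Finset (Fin 36)) = {12,22,10,20} from by decide, quad]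
  -- basic disjointness from the six-family
  have bot6 : ∀ S T : Finset (Fin 36), S ⊆ {10,11,12,20,21,22} →
      T ⊆ {10,11,12,20,21,22} → S ∩ T = ∅ → csD U S ⊓ csD U T = ⊥ := by
    intro S T hS hT hST
    rw [hinfK S T hS hT, hST]
    exact csD_empty U
  have h23 : (U 11 ⊔ U 21) ⊓ (U 12 ⊔ U 22) = ⊥ := by
    have h := bot6 {11,21} {12,22} (by decide) (by decide) (by decide)
    rwa [csD_pair U, csD_pair U] at h
  have h123 : (U 10 ⊔ U 20) ⊓ ((U 11 ⊔ U 21) ⊔ (U 12 ⊔ U 22)) = ⊥ := by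
    have h := bot6 {10,20} {11,12,21,22} (by decide) (by decide) (by decide)
    rwa [csD_pair U, hQeq] at h
  -- disjointness of A-spaces with the X/Y/Z spaces (via gadget pairs)
  have inf_gadget : ∀ Wa Wb Va Vb : Submodule F E,
      Wa ⊓ (Va ⊔ (Vb ⊔ Wb)) = ⊥ → Wb ⊓ (Va ⊔ (Vb ⊔ Wa)) = ⊥ →
      (Wa ⊔ Wb) ⊓ (Va ⊔ Vb) = ⊥ := by
    intro Wa Wb Va Vb h1 h2
    rw [Submodule.eq_bot_iff]
    rintro x ⟨hxA, hxX⟩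
    obtain ⟨a, haa, b, hbb, rfl⟩ := Submodule.mem_sup.mp hxA
    have hab : a + b ∈ Va ⊔ (Vb ⊔ Wb) := (sup_le_sup_left le_sup_left Va) hxX
    have ha0 : a = 0 := by
      refine mem_inf_bot h1 haa ?_
      have he : a = (a + b) - b := by abel
      rw [he]
      exact sub_mem hab ((le_sup_of_le_right le_sup_right : Wb ≤ Va ⊔ (Vb ⊔ Wb)) hbb)
    rw [ha0, zero_add]
    have hb' : b ∈ Va ⊔ Vb := by rwa [ha0, zero_add] at hxX
    exact mem_inf_bot h2 hbb ((sup_le_sup_left le_sup_left Va) hb')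
  have k1 : U 10 ⊓ (U 13 ⊔ (U 23 ⊔ U 20)) = ⊥ := by
    have h := K3D hK 30 {13,23,31} (by decide)
    rw [csD_triple U, c30, c31] at h
    exact h
  have k2 : U 20 ⊓ (U 13 ⊔ (U 23 ⊔ U 10)) = ⊥ := by
    have h := K3D hK 31 {13,23,30} (by decide)
    rw [csD_triple U, c30, c31] at h
    exact h
  have hXA1 : (U 10 ⊔ U 20) ⊓ ((U 13 ⊔ U 23 : Submodule F E)) = ⊥ :=
    inf_gadget _ _ _ _ k1 k2
  have k3 : U 11 ⊓ (U 14 ⊔ (U 24 ⊔ U 21)) = ⊥ := by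
    have h := K3D hK 32 {14,24,33} (by decide)
    rw [csD_triple U, c32, c33] at h
    exact h
  have k4 : U 21 ⊓ (U 14 ⊔ (U 24 ⊔ U 11)) = ⊥ := by
    have h := K3D hK 33 {14,24,32} (by decide)
    rw [csD_triple U, c32, c33] at h
    exact h
  have hYA2 : (U 11 ⊔ U 21) ⊓ ((U 14 ⊔ U 24 : Submodule F E)) = ⊥ :=
    inf_gadget _ _ _ _ k3 k4
  have k5 : U 12 ⊓ (U 15 ⊔ (U 25 ⊔ U 22)) = ⊥ := by
    have h := K3D hK 34 {15,25,35} (by decide)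
    rw [csD_triple U, c34, c35] at h
    exact h
  have k6 : U 22 ⊓ (U 15 ⊔ (U 25 ⊔ U 12)) = ⊥ := by
    have h := K3D hK 35 {15,25,34} (by decide)
    rw [csD_triple U, c34, c35] at h
    exact h
  have hZA3 : (U 12 ⊔ U 22) ⊓ ((U 15 ⊔ U 25 : Submodule F E)) = ⊥ :=
    inf_gadget _ _ _ _ k5 k6
  -- the full 4t spaces
  have hfour : ∀ S4 : Finset (Fin 36), S4 ⊆ {10,11,12,20,21,22} → S4.card = 4 →
      fD U S4 = t * 4 := by
    intro S4 hS4 hc4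
    rw [hcardK S4 hS4, hc4]
  have mk4 : ∀ (W1 W2 : Submodule F E) (S4 : Finset (Fin 36)),
      S4 ⊆ {10,11,12,20,21,22} → S4.card = 4 →
      W1 ≤ csD U S4 → W2 ≤ csD U S4 → W1 ⊓ W2 = ⊥ →
      finrank F W1 = t + t → finrank F W2 = t + t → W1 ⊔ W2 = csD U S4 := by
    intro W1 W2 S4 hS4 hc4 l1 l2 hbot d1 d2
    have h1 := Submodule.finrank_sup_add_finrank_inf_eq W1 W2
    rw [hbot, d1, d2] at h1
    have h2 : finrank F ((⊥ : Submodule F E)) = 0 := finrank_bot F _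
    have h3 := hfour S4 hS4 hc4
    have h4 : fD U S4 = finrank F (csD U S4) := rfl
    exact Submodule.eq_of_le_of_finrank_le (sup_le l1 l2) (by omega)
  have hPX : (U 10 ⊔ U 20) ⊔ (U 13 ⊔ U 23) = csD U {10,11,20,21} := by
    refine mk4 _ _ _ (by decide) (by decide) ?_ (sup_le x13 x23) hXA1 dA1 dX
    rw [hPeq]
    exact le_sup_left
  have hQY : (U 11 ⊔ U 21) ⊔ (U 14 ⊔ U 24) = csD U {11,12,21,22} := by
    refine mk4 _ _ _ (by decide) (by decide) ?_ (sup_le y14 y24) hYA2 dA2 dY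
    rw [hQeq]
    exact le_sup_left
  have hRZ : (U 12 ⊔ U 22) ⊔ (U 15 ⊔ U 25) = csD U {10,12,20,22} := by
    refine mk4 _ _ _ (by decide) (by decide) ?_ (sup_le z15 z25) hZA3 dA3 dZ
    rw [hReq]
    exact le_sup_left
  have hX12 : (U 13 ⊔ U 23 : Submodule F E) ≤ (U 10 ⊔ U 20) ⊔ (U 11 ⊔ U 21) := by
    rw [← hPeq]
    exact sup_le x13 x23
  have hXA2 : (U 11 ⊔ U 21 : Submodule F E) ≤ (U 10 ⊔ U 20) ⊔ (U 13 ⊔ U 23) := by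
    rw [hPX, hPeq]
    exact le_sup_right
  have hY23 : (U 14 ⊔ U 24 : Submodule F E) ≤ (U 11 ⊔ U 21) ⊔ (U 12 ⊔ U 22) := by
    rw [← hQeq]
    exact sup_le y14 y24
  have hYA3 : (U 12 ⊔ U 22 : Submodule F E) ≤ (U 11 ⊔ U 21) ⊔ (U 14 ⊔ U 24) := by
    rw [hQY, hQeq]
    exact le_sup_right
  have hZ31 : (U 15 ⊔ U 25 : Submodule F E) ≤ (U 12 ⊔ U 22) ⊔ (U 10 ⊔ U 20) := by
    rw [← hReq]
    exact sup_le z15 z25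
  have hZA1 : (U 10 ⊔ U 20 : Submodule F E) ≤ (U 12 ⊔ U 22) ⊔ (U 15 ⊔ U 25) := by
    rw [hRZ, hReq]
    exact le_sup_right
  -- position of G inside the three cevian spaces
  have gbase : ∀ (i17 i27 : Fin 36) (M6 : Finset (Fin 36)),
      I4tab i17 = insert i27 M6 → M6 ⊆ I4tab i27 → fD U M6 + t + t ≤ 6 * t := by
    intro i17 i27 M6 hB hM
    have h1 := hfBle i17
    rw [hB] at h1
    have h2 : fD U (insert i27 M6) = finrank F ((U i27 ⊔ csD U M6 : Submodule F E)) := by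
      show finrank F ((csD U (insert i27 M6) : Submodule F E)) = _
      rw [csD_insert U]
    rw [h2, hK i27 M6 hM] at h1
    omega
  have hG1 : (U 16 ⊔ U 26 : Submodule F E) ≤ (U 10 ⊔ U 20) ⊔ (U 14 ⊔ U 24) := by
    have hb := gbase 17 27 {10,14,16,20,24,26} (by decide) (by decide)
    have hA1Y : (U 10 ⊔ U 20) ⊓ ((U 14 ⊔ U 24 : Submodule F E)) = ⊥ := by
      have h := bot6 {10,20} {11,12,21,22} (by decide) (by decide) (by decide)
      rw [csD_pair U] at h
      have hle : (U 10 ⊔ U 20) ⊓ (U 14 ⊔ U 24) ≤ (U 10 ⊔ U 20) ⊓ csD U {11,12,21,22} :=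
        inf_le_inf_left _ (sup_le y14 y24)
      rw [h] at hle
      exact le_bot_iff.mp hle
    have hd14 := Submodule.finrank_sup_add_finrank_inf_eq (U 10 ⊔ U 20) (U 14 ⊔ U 24)
    rw [hA1Y, dA1, dY] at hd14
    have hbb : finrank F ((⊥ : Submodule F E)) = 0 := finrank_bot F _
    have hle2 : (U 10 ⊔ U 20) ⊔ (U 14 ⊔ U 24) ≤ csD U {10,14,16,20,24,26} := by
      refine sup_le (sup_le ?_ ?_) (sup_le ?_ ?_) <;>
        exact csD_le_of_mem U (by decide)
    have heq : (U 10 ⊔ U 20) ⊔ (U 14 ⊔ U 24) = csD U ({10,14,16,20,24,26} : Finset (Fin 36)) := by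
      refine Submodule.eq_of_le_of_finrank_le hle2 ?_
      have h4 : fD U ({10,14,16,20,24,26} : Finset (Fin 36)) =
          finrank F (csD U ({10,14,16,20,24,26} : Finset (Fin 36))) := rfl
      omega
    rw [heq]
    exact sup_le (csD_le_of_mem U (by decide)) (csD_le_of_mem U (by decide))
  have hG2 : (U 16 ⊔ U 26 : Submodule F E) ≤ (U 11 ⊔ U 21) ⊔ (U 15 ⊔ U 25) := by
    have hb := gbase 18 28 {11,15,16,21,25,26} (by decide) (by decide)
    have hA2Z : (U 11 ⊔ U 21) ⊓ ((U 15 ⊔ U 25 : Submodule F E)) = ⊥ := by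
      have h := bot6 {11,21} {10,12,20,22} (by decide) (by decide) (by decide)
      rw [csD_pair U] at h
      have hle : (U 11 ⊔ U 21) ⊓ (U 15 ⊔ U 25) ≤ (U 11 ⊔ U 21) ⊓ csD U {10,12,20,22} :=
        inf_le_inf_left _ (sup_le z15 z25)
      rw [h] at hle
      exact le_bot_iff.mp hle
    have hd15 := Submodule.finrank_sup_add_finrank_inf_eq (U 11 ⊔ U 21) (U 15 ⊔ U 25)
    rw [hA2Z, dA2, dZ] at hd15
    have hbb : finrank F ((⊥ : Submodule F E)) = 0 := finrank_bot F _
    have hle2 : (U 11 ⊔ U 21) ⊔ (U 15 ⊔ U 25) ≤ csD U {11,15,16,21,25,26} := by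
      refine sup_le (sup_le ?_ ?_) (sup_le ?_ ?_) <;>
        exact csD_le_of_mem U (by decide)
    have heq : (U 11 ⊔ U 21) ⊔ (U 15 ⊔ U 25) = csD U ({11,15,16,21,25,26} : Finset (Fin 36)) := by
      refine Submodule.eq_of_le_of_finrank_le hle2 ?_
      have h4 : fD U ({11,15,16,21,25,26} : Finset (Fin 36)) =
          finrank F (csD U ({11,15,16,21,25,26} : Finset (Fin 36))) := rfl
      omega
    rw [heq]
    exact sup_le (csD_le_of_mem U (by decide)) (csD_le_of_mem U (by decide))
  have hG3 : (U 16 ⊔ U 26 : Submodule F E) ≤ (U 12 ⊔ U 22) ⊔ (U 13 ⊔ U 23) := by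
    have hb := gbase 19 29 {12,13,16,22,23,26} (by decide) (by decide)
    have hA3X : (U 12 ⊔ U 22) ⊓ ((U 13 ⊔ U 23 : Submodule F E)) = ⊥ := by
      have h := bot6 {12,22} {10,11,20,21} (by decide) (by decide) (by decide)
      rw [csD_pair U] at h
      have hle : (U 12 ⊔ U 22) ⊓ (U 13 ⊔ U 23) ≤ (U 12 ⊔ U 22) ⊓ csD U {10,11,20,21} :=
        inf_le_inf_left _ (sup_le x13 x23)
      rw [h] at hle
      exact le_bot_iff.mp hle
    have hd16 := Submodule.finrank_sup_add_finrank_inf_eq (U 12 ⊔ U 22) (U 13 ⊔ U 23)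
    rw [hA3X, dA3, dX] at hd16
    have hbb : finrank F ((⊥ : Submodule F E)) = 0 := finrank_bot F _
    have hle2 : (U 12 ⊔ U 22) ⊔ (U 13 ⊔ U 23) ≤ csD U {12,13,16,22,23,26} := by
      refine sup_le (sup_le ?_ ?_) (sup_le ?_ ?_) <;>
        exact csD_le_of_mem U (by decide)
    have heq : (U 12 ⊔ U 22) ⊔ (U 13 ⊔ U 23) = csD U ({12,13,16,22,23,26} : Finset (Fin 36)) := by
      refine Submodule.eq_of_le_of_finrank_le hle2 ?_
      have h4 : fD U ({12,13,16,22,23,26} : Finset (Fin 36)) =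
          finrank F (csD U ({12,13,16,22,23,26} : Finset (Fin 36))) := rfl
      omega
    rw [heq]
    exact sup_le (csD_le_of_mem U (by decide)) (csD_le_of_mem U (by decide))
  obtain ⟨hXY, hbound⟩ := lemA (U 10 ⊔ U 20) (U 11 ⊔ U 21) (U 12 ⊔ U 22)
    (U 13 ⊔ U 23) (U 14 ⊔ U 24) (U 15 ⊔ U 25) (U 16 ⊔ U 26) (t + t)
    dA1 dA2 dA3 dG h23 h123 hX12 hXA2 hXA1 hY23 hYA3 hYA2 hZ31 hZA1 hZA3 hG1 hG2 hG3
  have hb := hbound hchar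
  -- lower bound on the dimension of X ⊔ Y ⊔ Z
  have q1 : fD U {13,14,15,23,24,25} = fD U {14,15,23,24,25} + t := by
    show finrank F ((csD U ({13,14,15,23,24,25} : Finset (Fin 36)) : Submodule F E)) = _
    rw [csD_insert U]
    exact hK 13 _ (by decide)
  have q2 : fD U {14,15,23,24,25} = fD U {15,23,24,25} + t := by
    show finrank F ((csD U ({14,15,23,24,25} : Finset (Fin 36)) : Submodule F E)) = _
    rw [csD_insert U]
    exact hK 14 _ (by decide)
  have q3 : fD U {15,23,24,25} = fD U {23,24,25} + t := by
    show finrank F ((csD U ({15,23,24,25} : Finset (Fin 36)) : Submodule F E)) = _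
    rw [csD_insert U]
    exact hK 15 _ (by decide)
  have hU2324 : U 23 ⊓ U 24 = ⊥ := by
    have hle : U 23 ⊓ U 24 ≤ (U 13 ⊔ U 23) ⊓ (U 14 ⊔ U 24) :=
      inf_le_inf le_sup_right le_sup_right
    rw [hXY] at hle
    exact le_bot_iff.mp hle
  have q2324 : fD U {23,24} = t + t := by
    show finrank F ((csD U ({23,24} : Finset (Fin 36)) : Submodule F E)) = _
    rw [csD_pair U]
    exact supdimD hK hU2324
  have qlow : fD U {23,24} ≤ fD U {23,24,25} :=
    Submodule.finrank_mono (csD_mono U (by decide))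
  have hS : csD U ({13,14,15,23,24,25} : Finset (Fin 36)) =
      (U 13 ⊔ U 23) ⊔ (U 14 ⊔ U 24) ⊔ (U 15 ⊔ U 25) := by
    apply le_antisymm
    · refine Finset.sup_le ?_
      intro j hj
      simp only [Finset.mem_insert, Finset.mem_singleton] at hj
      rcases hj with rfl | rfl | rfl | rfl | rfl | rfl
      · exact le_sup_of_le_left (le_sup_of_le_left le_sup_left)
      · exact le_sup_of_le_left (le_sup_of_le_right le_sup_left)
      · exact le_sup_of_le_right le_sup_left
      · exact le_sup_of_le_left (le_sup_of_le_left le_sup_right)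
      · exact le_sup_of_le_left (le_sup_of_le_right le_sup_right)
      · exact le_sup_of_le_right le_sup_right
    · refine sup_le (sup_le ?_ ?_) ?_ <;> refine sup_le ?_ ?_ <;>
        exact csD_le_of_mem U (by decide)
  have hfin : fD U {13,14,15,23,24,25} =
      finrank F (((U 13 ⊔ U 23) ⊔ (U 14 ⊔ U 24) ⊔ (U 15 ⊔ U 25) : Submodule F E)) := by
    show finrank F ((csD U ({13,14,15,23,24,25} : Finset (Fin 36)) : Submodule F E)) = _
    rw [hS]
  omega

end Parts

set_option maxHeartbeats 1000000 in
theorem stmt15 {F : Type} [Field F] (t r : ℕ) (ht : 0 < t) (hr : 0 < r)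
    (H : Fin 36 → Matrix (Fin r) (Fin t) F)
    (hdec : ∀ i : Fin 36,
      blockRank H (insert i (I4interf i)) = blockRank H (I4interf i) + t) :
    6 * t < r := by
  by_contra hcon
  push_neg at hcon
  classical
  set U : Fin 36 → Submodule F (Fin r → F) :=
    fun i => Submodule.span F (Set.range (H i)ᵀ) with hU
  have hbr : ∀ L : Finset (Fin 36), blockRank H L = fD U L := by
    intro L
    show Matrix.rank (Matrix.of fun (k : Fin r) (p : {l // l ∈ L} × Fin t) => H p.1.1 k p.2)
        = finrank F (csD U L)
    rw [Matrix.rank_eq_finrank_span_cols]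
    have hgoal : Submodule.span F (Set.range (Matrix.of fun (k : Fin r)
        (p : {l // l ∈ L} × Fin t) => H p.1.1 k p.2)ᵀ) = csD U L := by
      have h1 : Set.range (Matrix.of fun (k : Fin r) (p : {l // l ∈ L} × Fin t) =>
          H p.1.1 k p.2)ᵀ = ⋃ (l : {l // l ∈ L}), Set.range (H l.1)ᵀ := by
        ext v
        constructor
        · rintro ⟨⟨l, j⟩, rfl⟩
          refine Set.mem_iUnion.mpr ⟨l, ⟨j, ?_⟩⟩
          ext k
          simp [Matrix.transpose_apply]
        · intro hv
          obtain ⟨l2, hv2⟩ := Set.mem_iUnion.mp hv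
          obtain ⟨j, rfl⟩ := hv2
          refine ⟨(l2, j), ?_⟩
          ext k
          simp [Matrix.transpose_apply]
      rw [h1, Submodule.span_iUnion]
      apply le_antisymm
      · exact iSup_le fun l => Finset.le_sup (f := U) l.2
      · exact Finset.sup_le fun i hi => le_iSup_of_le ⟨i, hi⟩ le_rfl
    exact congrArg (fun S : Submodule F (Fin r → F) => finrank F S) hgoal
  have hdec' : ∀ i : Fin 36, fD U (insert i (I4tab i)) = fD U (I4tab i) + t := by
    intro i
    have h := hdec i
    rw [hbr, hbr] at h
    rw [I4eq i] at h
    exact h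
  have hEr : finrank F (Fin r → F) = r := by
    rw [Module.finrank_pi]
    exact Fintype.card_fin r
  have hfle : ∀ L, fD U L ≤ 6 * t := by
    intro L
    refine le_trans (le_trans (Submodule.finrank_le _) (le_of_eq hEr)) hcon
  have hUle : ∀ i, finrank F (U i) ≤ t := by
    intro i
    calc finrank F (U i) = (H i).rank := (Matrix.rank_eq_finrank_span_cols (H i)).symm
      _ ≤ t := Matrix.rank_le_width (H i)
  have hK : KH U t := by
    intro i M hM
    have h1 : (insert i M) ∪ (I4tab i) = insert i (I4tab i) := by
      rw [Finset.insert_union, Finset.union_eq_right.mpr hM]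
    have h2 : (insert i M) ∩ (I4tab i) = M := by
      rw [Finset.insert_inter_of_notMem (I4notmem i), Finset.inter_eq_left.mpr hM]
    have h3 := fsubD U (insert i M) (I4tab i)
    rw [h1, h2, hdec' i] at h3
    have h6 : fD U (insert i M) = finrank F ((U i ⊔ csD U M : Submodule F (Fin r → F))) := by
      rw [fD_def, csD_insert U]
    have h7 := Submodule.finrank_add_le_finrank_add_finrank (U i) (csD U M)
    have h8 := hUle i
    have h9 : fD U M = finrank F (csD U M) := rfl
    omega
  by_cases hchar : (2 : F) = 0
  · exact partA hchar hK hfle ht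
  · exact hchar (partB hK hfle ht)
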